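/- Assume: Z and N are independent standard Gaussian random variables; f : ℝ → ℝ is Borel measurable; f(Z) is not independent of Z; the limit D := lim_{v→0⁺} mmse_z(v)/v exists. Let Λ₁ and Λ₂ be random variables with a ≤ Λ_i ≤ b almost surely (0 < a ≤ b < ∞), E[Λ₁] = E[Λ₂] = 1, and suppose Λ₁ is spikier than Λ₂ in the Lorenz sense: E[h(Λ₂)] ≤ E[h(Λ₁)] for every continuous convex function h : [0, ∞) → ℝ. For δ > 1 and i ∈ {1, 2}, define P_{i,δ}(v) := E[φ(v)/(φ(v) + δ·Λ_i)] − g_δ(v), where g_δ(v) := 1 − δ·(1 − mmse_z(v)/v), and define the perfect-reconstruction threshold δ^p_i := inf{δ > 1 : P_{i,δ}(v) > 0 for all v ∈ (0, 1]}. Then δ^p_1 ≤ δ^p_2: a spikier spectrum never increases the number of measurements needed for perfect reconstruction. -/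

import Mathlib

open MeasureTheory ProbabilityTheory Filter

section Aux
open Real
open scoped ENNReal NNReal

lemma gauss_density_eq : (gaussianReal 0 1 : Measure ℝ)
    = (volume : Measure ℝ).withDensity (fun x => ((gaussianPDFReal 0 1 x).toNNReal : ℝ≥0∞)) := by
  rw [gaussianReal_of_var_ne_zero 0 one_ne_zero]
  rfl

lemma gauss_int (g : ℝ → ℝ) :
    ∫ x, g x ∂(gaussianReal 0 1) = ∫ x, gaussianPDFReal 0 1 x * g x := by
  rw [gauss_density_eq, integral_withDensity_eq_integral_smul
    ((measurable_gaussianPDFReal 0 1).real_toNNReal) g]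
  refine integral_congr_ae (Filter.Eventually.of_forall fun x => ?_)
  simp [NNReal.smul_def, Real.coe_toNNReal _ (gaussianPDFReal_nonneg 0 1 x)]

lemma gauss_pdf_eq (x : ℝ) : gaussianPDFReal 0 1 x
    = (Real.sqrt (2 * π))⁻¹ * Real.exp (-(1/2) * x ^ 2) := by
  simp only [gaussianPDFReal, NNReal.coe_one, mul_one, sub_zero]
  rw [show -x ^ 2 / 2 = -(1/2) * x ^ 2 by ring]

lemma gauss_pdf_even (x : ℝ) : gaussianPDFReal 0 1 (-x) = gaussianPDFReal 0 1 x := by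
  rw [gauss_pdf_eq, gauss_pdf_eq, neg_sq]

lemma gauss_first_moment : ∫ x, x ∂(gaussianReal 0 1) = 0 := by
  rw [gauss_int]
  have h1 : ∫ x : ℝ, gaussianPDFReal 0 1 (-x) * (-x)
      = ∫ x : ℝ, gaussianPDFReal 0 1 x * x := by
    exact integral_neg_eq_self (fun x : ℝ => gaussianPDFReal 0 1 x * x) volume
  have h2 : (fun x : ℝ => gaussianPDFReal 0 1 (-x) * (-x))
      = fun x : ℝ => -(gaussianPDFReal 0 1 x * x) := by
    funext x; rw [gauss_pdf_even]; ring
  rw [h2, integral_neg] at h1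
  linarith

lemma int_sq_exp : ∫ x : ℝ, x ^ 2 * Real.exp (-(1/2) * x ^ 2) = Real.sqrt (2 * π) := by
  have habs : ∫ x : ℝ, x ^ 2 * Real.exp (-(1/2) * x ^ 2)
      = 2 * ∫ x in Set.Ioi (0:ℝ), x ^ 2 * Real.exp (-(1/2) * x ^ 2) := by
    rw [← integral_comp_abs (f := fun t => t ^ 2 * Real.exp (-(1/2) * t ^ 2))]
    congr 1; funext x; rw [sq_abs]
  have hrp : ∫ x in Set.Ioi (0:ℝ), x ^ 2 * Real.exp (-(1/2) * x ^ 2)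
      = ∫ x in Set.Ioi (0:ℝ), x ^ (2:ℝ) * Real.exp (-(1/2) * x ^ (2:ℝ)) := by
    refine setIntegral_congr_fun measurableSet_Ioi (fun x hx => ?_)
    rw [show (2:ℝ) = ((2:ℕ):ℝ) by norm_num, Real.rpow_natCast]
  have hval := integral_rpow_mul_exp_neg_mul_rpow (p := 2) (q := 2) (b := 1/2)
    (by norm_num) (by norm_num) (by norm_num)
  rw [habs, hrp, hval]
  have hG : Real.Gamma ((2 + 1) / 2) = Real.sqrt π / 2 := by
    rw [show ((2:ℝ) + 1) / 2 = 1/2 + 1 by norm_num, Real.Gamma_add_one (by norm_num),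
      Real.Gamma_one_half_eq]
    ring
  have hb : ((1:ℝ)/2) ^ (-((2:ℝ) + 1) / 2) = 2 * Real.sqrt 2 := by
    rw [one_div, show -((2:ℝ) + 1) / 2 = -(3/2) by norm_num,
      Real.inv_rpow (by norm_num : (0:ℝ) ≤ 2), ← Real.rpow_neg (by norm_num : (0:ℝ) ≤ 2),
      neg_neg, show (3:ℝ)/2 = 1 + 1/2 by norm_num,
      Real.rpow_add (by norm_num : (0:ℝ) < 2), Real.rpow_one, ← Real.sqrt_eq_rpow]
  rw [hG, hb, Real.sqrt_mul (by norm_num : (0:ℝ) ≤ 2)]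
  ring

lemma gauss_second_moment : ∫ x, x ^ 2 ∂(gaussianReal 0 1) = 1 := by
  rw [gauss_int]
  have : (fun x : ℝ => gaussianPDFReal 0 1 x * x ^ 2)
      = fun x : ℝ => (Real.sqrt (2 * π))⁻¹ * (x ^ 2 * Real.exp (-(1/2) * x ^ 2)) := by
    funext x; rw [gauss_pdf_eq]; ring
  rw [this, integral_const_mul, int_sq_exp, inv_mul_cancel₀]
  positivity

lemma integ_sq_exp : Integrable (fun x : ℝ => x ^ 2 * Real.exp (-(1/2) * x ^ 2)) := by
  have := integrable_rpow_mul_exp_neg_mul_sq (b := 1/2) (by norm_num) (s := 2) (by norm_num)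
  refine this.congr (Filter.Eventually.of_forall fun x => ?_)
  have h2 : x ^ (2:ℝ) = x ^ (2:ℕ) := by
    rw [← Real.rpow_natCast x 2]; norm_num
  simp only [h2]

lemma integ_sq_gauss : Integrable (fun x : ℝ => x ^ 2) (gaussianReal 0 1) := by
  rw [gauss_density_eq, integrable_withDensity_iff_integrable_smul
    ((measurable_gaussianPDFReal 0 1).real_toNNReal)]
  have : (fun x : ℝ => (gaussianPDFReal 0 1 x).toNNReal • x ^ 2)
      = fun x : ℝ => (Real.sqrt (2 * π))⁻¹ * (x ^ 2 * Real.exp (-(1/2) * x ^ 2)) := by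
    funext x
    rw [NNReal.smul_def, Real.coe_toNNReal _ (gaussianPDFReal_nonneg 0 1 x), gauss_pdf_eq,
      smul_eq_mul]
    ring
  rw [this]
  exact integ_sq_exp.const_mul _

lemma memLp_two_gauss : MemLp (fun x : ℝ => x) 2 (gaussianReal 0 1) := by
  exact (memLp_two_iff_integrable_sq aestronglyMeasurable_id).mpr integ_sq_gauss


lemma mul_integrable_of_memLp_two {Ω : Type*} [MeasurableSpace Ω] {μ : Measure Ω}
    {F G : Ω → ℝ} (hF : MemLp F 2 μ) (hG : MemLp G 2 μ) :
    Integrable (fun ω => F ω * G ω) μ := by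
  refine Integrable.mono' ((hF.integrable_sq.add hG.integrable_sq).div_const 2)
    (hF.aestronglyMeasurable.mul hG.aestronglyMeasurable)
    (Filter.Eventually.of_forall fun ω => ?_)
  simp only [Pi.add_apply]
  rw [Real.norm_eq_abs, abs_mul]
  nlinarith [sq_nonneg (|F ω| - |G ω|), sq_abs (F ω), sq_abs (G ω),
    abs_nonneg (F ω), abs_nonneg (G ω)]

lemma condexp_L2_min {Ω : Type*} {m : MeasurableSpace Ω} [mΩ : MeasurableSpace Ω]
    (hm : m ≤ mΩ) {μ : Measure Ω} [IsProbabilityMeasure μ] {Z g : Ω → ℝ}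
    (hZ2 : MemLp Z 2 μ) (hg2 : MemLp g 2 μ) (hgm' : AEStronglyMeasurable[m] g μ) :
    ∫ ω, (Z ω - (μ[Z|m]) ω) ^ 2 ∂μ ≤ ∫ ω, (Z ω - g ω) ^ 2 ∂μ := by
  haveI : SigmaFinite (μ.trim hm) := inferInstance
  obtain ⟨Y, hY2, hYm', hYae⟩ :
      ∃ Y : Ω → ℝ, MemLp Y 2 μ ∧ AEStronglyMeasurable[m] Y μ ∧ Y =ᵐ[μ] μ[Z|m] := by
    refine ⟨_, Lp.memLp
      (((condExpL2 ℝ ℝ hm (hZ2.toLp Z)) : lpMeas ℝ ℝ m 2 μ) : Lp ℝ 2 μ), ?_, ?_⟩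
    · exact aestronglyMeasurable_condExpL2 hm _
    · refine ae_eq_condExp_of_forall_setIntegral_eq hm (hZ2.integrable one_le_two)
        (fun t ht hμt => (integrable_condExpL2_of_isFiniteMeasure hm).integrableOn)
        (fun t ht hμt => ?_) (aestronglyMeasurable_condExpL2 hm _)
      rw [integral_condExpL2_eq hm (hZ2.toLp Z) ht hμt.ne]
      exact setIntegral_congr_ae (hm t ht) ((hZ2.coeFn_toLp).mono fun x hx _ => hx)
  have hWZint : Integrable (fun ω => (Y ω - g ω) * Z ω) μ :=
    mul_integrable_of_memLp_two (hY2.sub hg2) hZ2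
  have hWYint : Integrable (fun ω => (Y ω - g ω) * Y ω) μ :=
    mul_integrable_of_memLp_two (hY2.sub hg2) hY2
  have hcross : ∫ ω, (Y ω - g ω) * Z ω ∂μ = ∫ ω, (Y ω - g ω) * Y ω ∂μ := by
    have h1 : μ[(fun ω => (Y ω - g ω) * Z ω)|m]
        =ᵐ[μ] fun ω => (Y ω - g ω) * (μ[Z|m]) ω :=
      condExp_mul_of_aestronglyMeasurable_left (hYm'.sub hgm') hWZint (hZ2.integrable one_le_two)
    calc ∫ ω, (Y ω - g ω) * Z ω ∂μ
        = ∫ ω, (μ[(fun ω => (Y ω - g ω) * Z ω)|m]) ω ∂μ :=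
          (integral_condExp hm).symm
      _ = ∫ ω, (Y ω - g ω) * (μ[Z|m]) ω ∂μ := integral_congr_ae h1
      _ = ∫ ω, (Y ω - g ω) * Y ω ∂μ :=
          integral_congr_ae (hYae.mono fun ω h => by dsimp only; rw [h])
  have hWRint : Integrable (fun ω => (Y ω - g ω) * (Z ω - Y ω)) μ :=
    mul_integrable_of_memLp_two (hY2.sub hg2) (hZ2.sub hY2)
  have hWR0 : ∫ ω, (Y ω - g ω) * (Z ω - Y ω) ∂μ = 0 := by
    have he : (fun ω => (Y ω - g ω) * (Z ω - Y ω))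
        = fun ω => (Y ω - g ω) * Z ω - (Y ω - g ω) * Y ω := by
      funext ω; ring
    rw [he, integral_sub hWZint hWYint, hcross, sub_self]
  have hmm : ∫ ω, (Z ω - (μ[Z|m]) ω) ^ 2 ∂μ = ∫ ω, (Z ω - Y ω) ^ 2 ∂μ :=
    integral_congr_ae (hYae.mono fun ω h => by dsimp only; rw [h])
  rw [hmm]
  have he : (fun ω => (Z ω - g ω) ^ 2)
      = fun ω => (Z ω - Y ω) ^ 2
        + (2 * ((Y ω - g ω) * (Z ω - Y ω)) + (Y ω - g ω) ^ 2) := by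
    funext ω; ring
  have hRsq : Integrable (fun ω => (Z ω - Y ω) ^ 2) μ := by
    simpa using (hZ2.sub hY2).integrable_sq
  have hWsq : Integrable (fun ω => (Y ω - g ω) ^ 2) μ := by
    simpa using (hY2.sub hg2).integrable_sq
  have hint2 : Integrable
      (fun ω => 2 * ((Y ω - g ω) * (Z ω - Y ω)) + (Y ω - g ω) ^ 2) μ :=
    (hWRint.const_mul 2).add hWsq
  rw [he, integral_add hRsq hint2,
    integral_add (hWRint.const_mul 2) hWsq,
    integral_const_mul, hWR0]
  have : 0 ≤ ∫ ω, (Y ω - g ω) ^ 2 ∂μ := integral_nonneg fun ω => sq_nonneg _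
  linarith

lemma mmse_le_v {Ω : Type*} [mΩ : MeasurableSpace Ω] {μ : Measure Ω} [IsProbabilityMeasure μ]
    (Z N : Ω → ℝ) (f : ℝ → ℝ) (hZ : Measurable Z) (hN : Measurable N) (hf : Measurable f)
    (hZg : μ.map Z = gaussianReal 0 1) (hNg : μ.map N = gaussianReal 0 1)
    (hZN : IndepFun Z N μ) {v : ℝ} (hv : v ∈ Set.Ioc (0:ℝ) 1) :
    ∫ ω, (Z ω - (μ[Z | MeasurableSpace.comap
        (fun ω => (Real.sqrt (1 / v - 1) * Z ω + N ω, f (Z ω))) inferInstance]) ω) ^ 2 ∂μ ≤ v := by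
  obtain ⟨hv0, hv1⟩ := hv
  set s : ℝ := Real.sqrt (1 / v - 1) with hs_def
  have hs2 : s ^ 2 = 1 / v - 1 := Real.sq_sqrt (by
    rw [sub_nonneg]
    exact one_le_one_div hv0 hv1)
  set T : Ω → ℝ × ℝ := fun ω => (s * Z ω + N ω, f (Z ω)) with hT_def
  have hT : Measurable T := ((measurable_const.mul hZ).add hN).prodMk (hf.comp hZ)
  have hZ2 : MemLp Z 2 μ :=
    (memLp_map_measure_iff aestronglyMeasurable_id hZ.aemeasurable (p := 2)).mp
      (by rw [hZg]; exact memLp_two_gauss)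
  have hN2 : MemLp N 2 μ :=
    (memLp_map_measure_iff aestronglyMeasurable_id hN.aemeasurable (p := 2)).mp
      (by rw [hNg]; exact memLp_two_gauss)
  have hZsq : ∫ ω, Z ω ^ 2 ∂μ = 1 := by
    have h := integral_map (μ := μ) (φ := Z) (f := fun x : ℝ => x ^ 2) hZ.aemeasurable
      ((measurable_id.pow_const 2).aestronglyMeasurable)
    rw [← h, hZg, gauss_second_moment]
  have hNsq : ∫ ω, N ω ^ 2 ∂μ = 1 := by
    have h := integral_map (μ := μ) (φ := N) (f := fun x : ℝ => x ^ 2) hN.aemeasurable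
      ((measurable_id.pow_const 2).aestronglyMeasurable)
    rw [← h, hNg, gauss_second_moment]
  have hZmean : ∫ ω, Z ω ∂μ = 0 := by
    have h := integral_map (μ := μ) (φ := Z) (f := fun x : ℝ => x) hZ.aemeasurable
      measurable_id.aestronglyMeasurable
    rw [← h, hZg, gauss_first_moment]
  have hZN0 : ∫ ω, Z ω * N ω ∂μ = 0 := by
    have h : ∫ ω, Z ω * N ω ∂μ = (∫ ω, Z ω ∂μ) * ∫ ω, N ω ∂μ :=
      hZN.integral_mul_eq_mul_integral hZ.aestronglyMeasurable hN.aestronglyMeasurable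
    rw [h, hZmean, zero_mul]
  set c : ℝ := s * v with hc_def
  set g : Ω → ℝ := fun ω => c * (s * Z ω + N ω) with hg_def
  have hg2 : MemLp g 2 μ := ((hZ2.const_mul s).add hN2).const_mul c
  have hgm' : AEStronglyMeasurable[MeasurableSpace.comap T inferInstance] g μ := by
    have hTm : @Measurable Ω (ℝ × ℝ) (MeasurableSpace.comap T inferInstance) _ T :=
      Measurable.of_comap_le le_rfl
    have hgm : @Measurable Ω ℝ (MeasurableSpace.comap T inferInstance) _ g :=
      (measurable_fst.const_mul c).comp hTm
    exact hgm.stronglyMeasurable.aestronglyMeasurable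
  have hmain := condexp_L2_min (m := MeasurableSpace.comap T inferInstance)
    hT.comap_le hZ2 hg2 hgm'
  refine hmain.trans (le_of_eq ?_)
  have h1 : (1 : ℝ) - s ^ 2 * v = v := by
    rw [hs2]; field_simp; ring
  have he : (fun ω => (Z ω - g ω) ^ 2)
      = fun ω => v ^ 2 * Z ω ^ 2 - 2 * v * c * (Z ω * N ω) + c ^ 2 * N ω ^ 2 := by
    funext ω
    have h2 : Z ω - g ω = v * Z ω - c * N ω := by
      calc Z ω - c * (s * Z ω + N ω)
          = (1 - s ^ 2 * v) * Z ω - c * N ω := by rw [hc_def]; ring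
        _ = v * Z ω - c * N ω := by rw [h1]
    rw [h2]; ring
  have hc2 : c ^ 2 = v - v ^ 2 := by
    rw [hc_def, mul_pow, hs2]
    field_simp
  have hZsqI : Integrable (fun ω => Z ω ^ 2) μ := hZ2.integrable_sq
  have hNsqI : Integrable (fun ω => N ω ^ 2) μ := hN2.integrable_sq
  have hZNI : Integrable (fun ω => Z ω * N ω) μ := mul_integrable_of_memLp_two hZ2 hN2
  have hA : Integrable (fun ω => v ^ 2 * Z ω ^ 2 - 2 * v * c * (Z ω * N ω)) μ :=
    (hZsqI.const_mul _).sub (hZNI.const_mul _)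
  have hB : Integrable (fun ω => c ^ 2 * N ω ^ 2) μ := hNsqI.const_mul _
  rw [he, integral_add hA hB, integral_sub (hZsqI.const_mul _) (hZNI.const_mul _),
    integral_const_mul, integral_const_mul, integral_const_mul, hZsq, hNsq, hZN0, hc2]
  ring


lemma convexOn_aux {c d : ℝ} (hc : 0 < c) (hd : 0 < d) :
    ConvexOn ℝ (Set.Ici 0) (fun x : ℝ => c / (c + d * x)) := by
  have h0 : ConvexOn ℝ (Set.Ioi 0) (fun x : ℝ => x⁻¹) := by
    have h := (strictConvexOn_zpow (m := -1) (by norm_num) (by norm_num)).convexOn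
    have he : (fun x : ℝ => x ^ (-1 : ℤ)) = fun x : ℝ => x⁻¹ := by
      funext x; simp [zpow_neg_one]
    rwa [he] at h
  set A : ℝ →ᵃ[ℝ] ℝ := AffineMap.id ℝ ℝ + AffineMap.const ℝ ℝ (c / d) with hA_def
  have hAx : ∀ x : ℝ, A x = x + c / d := fun x => rfl
  have h1 : ConvexOn ℝ (A ⁻¹' Set.Ioi 0) ((fun x : ℝ => x⁻¹) ∘ A) := h0.comp_affineMap A
  have h2 : ConvexOn ℝ (Set.Ici 0) ((fun x : ℝ => x⁻¹) ∘ A) := by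
    refine h1.subset (fun x hx => ?_) (convex_Ici 0)
    simp only [Set.mem_preimage, hAx, Set.mem_Ioi]
    have : (0:ℝ) < c / d := div_pos hc hd
    exact add_pos_of_nonneg_of_pos hx this
  have h3 := h2.smul (le_of_lt (div_pos hc hd))
  have he : (fun x : ℝ => (c / d) • ((fun y : ℝ => y⁻¹) ∘ A) x)
      = fun x : ℝ => c / (c + d * x) := by
    funext x
    rw [Function.comp_apply, hAx, smul_eq_mul,
      show x + c / d = (c + d * x) / d by field_simp; ring,
      inv_div, div_mul_div_comm, mul_comm c d, mul_div_mul_left _ _ (ne_of_gt hd)]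
  rwa [he] at h3

end Aux

/-- A spikier spectrum never increases the perfect-reconstruction threshold.
With normalized spectra `Λ₁, Λ₂` (mean 1, bounded, `Λ₁` spikier in the Lorenz sense), the
thresholds `δ^p_i := inf{δ > 1 : P_{i,δ}(v) > 0 ∀ v ∈ (0,1]}` (as extended reals, with
`inf ∅ = +∞`) satisfy `δ^p_1 ≤ δ^p_2`. -/
theorem spectrum_spikiness_threshold_comparison {Ω : Type*} [MeasurableSpace Ω]
    {μ : Measure Ω} [IsProbabilityMeasure μ]
    (Z N : Ω → ℝ) (f : ℝ → ℝ)
    (hZ : Measurable Z) (hN : Measurable N) (hf : Measurable f)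
    (hZg : μ.map Z = gaussianReal 0 1) (hNg : μ.map N = gaussianReal 0 1)
    (hZN : IndepFun Z N μ)
    (Lam₁ Lam₂ : Ω → ℝ) (hLam₁ : Measurable Lam₁) (hLam₂ : Measurable Lam₂)
    (a b : ℝ) (ha : 0 < a) (hab : a ≤ b)
    (hbound₁ : ∀ᵐ ω ∂μ, Lam₁ ω ∈ Set.Icc a b)
    (hbound₂ : ∀ᵐ ω ∂μ, Lam₂ ω ∈ Set.Icc a b)
    (hmean₁ : ∫ ω, Lam₁ ω ∂μ = 1) (hmean₂ : ∫ ω, Lam₂ ω ∂μ = 1)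
    (hLorenz : ∀ h : ℝ → ℝ, ContinuousOn h (Set.Ici 0) → ConvexOn ℝ (Set.Ici 0) h →
      ∫ ω, h (Lam₂ ω) ∂μ ≤ ∫ ω, h (Lam₁ ω) ∂μ) :
    let mmse : ℝ → ℝ := fun v =>
      ∫ ω, (Z ω - (μ[Z | MeasurableSpace.comap
          (fun ω => (Real.sqrt (1 / v - 1) * Z ω + N ω, f (Z ω))) inferInstance]) ω) ^ 2 ∂μ
    let φ : ℝ → ℝ := fun v => mmse v * v / (v - mmse v)
    let S : (Ω → ℝ) → Set ℝ := fun Lam =>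
      {d : ℝ | 1 < d ∧ ∀ v ∈ Set.Ioc (0 : ℝ) 1,
        1 - d * (1 - mmse v / v) < ∫ ω, φ v / (φ v + d * Lam ω) ∂μ}
    (¬ IndepFun Z (fun ω => f (Z ω)) μ) →
    (∃ D : ℝ, Tendsto (fun v => mmse v / v) (nhdsWithin 0 (Set.Ioi 0)) (nhds D)) →
    (⨅ d ∈ S Lam₁, (d : EReal)) ≤ ⨅ d ∈ S Lam₂, (d : EReal) := by
  intro mmse φ S hindep hD
  refine biInf_mono fun d hd => ?_
  obtain ⟨hd1, hdv⟩ := hd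
  refine ⟨hd1, fun v hv => ?_⟩
  have hd0 : (0:ℝ) < d := lt_trans one_pos hd1
  have hmv : mmse v ≤ v := mmse_le_v Z N f hZ hN hf hZg hNg hZN hv
  have hm0 : (0:ℝ) ≤ mmse v := integral_nonneg fun ω => sq_nonneg _
  have hφ0 : (0:ℝ) ≤ φ v := by
    rcases eq_or_lt_of_le hmv with heq | hlt
    · show (0:ℝ) ≤ mmse v * v / (v - mmse v)
      rw [heq, sub_self, div_zero]
    · exact div_nonneg (mul_nonneg hm0 (le_of_lt hv.1)) (le_of_lt (sub_pos.mpr hlt))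
  rcases eq_or_lt_of_le hφ0 with hc0 | hcpos
  · have hzero : ∀ Lam : Ω → ℝ, ∫ ω, φ v / (φ v + d * Lam ω) ∂μ = 0 := fun Lam => by
      simp [← hc0]
    have h2 := hdv v hv
    rw [hzero Lam₂] at h2
    rw [hzero Lam₁]
    exact h2
  · have hcont : ContinuousOn (fun x : ℝ => φ v / (φ v + d * x)) (Set.Ici 0) := by
      refine ContinuousOn.div continuousOn_const
        ((continuous_const.add (continuous_const.mul continuous_id)).continuousOn)
        fun x hx => ne_of_gt (add_pos_of_pos_of_nonneg hcpos (mul_nonneg hd0.le hx))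
    have hconv : ConvexOn ℝ (Set.Ici 0) (fun x : ℝ => φ v / (φ v + d * x)) :=
      convexOn_aux hcpos hd0
    calc 1 - d * (1 - mmse v / v) < ∫ ω, φ v / (φ v + d * Lam₂ ω) ∂μ := hdv v hv
      _ ≤ ∫ ω, φ v / (φ v + d * Lam₁ ω) ∂μ :=
          hLorenz (fun x => φ v / (φ v + d * x)) hcont hconv
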